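/- arXiv:2310.05327 — 3 statements merged into one kernel-verified Lean document; each statement's English description precedes it below -/
import Mathlib

section
/- Let S ⊆ ℝ^{KM} be convex and let h be continuously differentiable on an open neighborhood of S with values in ℝ^{KM}, such that the total derivative Dh(z) is an invertible linear transformation of ℝ^{KM} for every z ∈ S, and such that for every z ∈ S and every i ∈ [K] there is exactly one j ∈ [K] with the Jacobian block ∂_j h_i(z) nonzero. Then there exists a single permutation π of [K], independent of z, such that for all z ∈ S and all i, j ∈ [K]: ∂_j h_i(z) ≠ 0 if and only if j = π(i); moreover, for every z ∈ S and every i ∈ [K] the block ∂_{π(i)} h_i(z) ∈ L(ℝ^M, ℝ^M) is invertible. -/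
open MeasureTheory Set Topology

noncomputable section

/-- The `k`-th slot (contiguous sub-vector) of `z ∈ ℝ^{K·M}`. -/
def slot {K M : ℕ} (k : Fin K) (z : EuclideanSpace ℝ (Fin K × Fin M)) :
    EuclideanSpace ℝ (Fin M) := WithLp.toLp 2 (fun m => z (k, m))

/-- Assemble a vector of `ℝ^{K·M}` from its `K` slots. -/
def unslot {K M : ℕ} (v : Fin K → EuclideanSpace ℝ (Fin M)) :
    EuclideanSpace ℝ (Fin K × Fin M) := WithLp.toLp 2 (fun p : Fin K × Fin M => v p.1 p.2)

/-- The continuous linear inclusion of the `j`-th slot. -/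
def slotIncl (K M : ℕ) (j : Fin K) :
    EuclideanSpace ℝ (Fin M) →L[ℝ] EuclideanSpace ℝ (Fin K × Fin M) :=
  LinearMap.toContinuousLinearMap
    { toFun := fun v => (WithLp.toLp 2 (fun p : Fin K × Fin M => if p.1 = j then v p.2 else 0) : EuclideanSpace ℝ (Fin K × Fin M))
      map_add' := by
        intro v w; ext p; by_cases h : p.1 = j <;> simp [h]
      map_smul' := by
        intro c v; ext p; by_cases h : p.1 = j <;> simp [h] }

/-- The continuous linear projection onto the `i`-th slot. -/
def slotProj (K M : ℕ) (i : Fin K) :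
    EuclideanSpace ℝ (Fin K × Fin M) →L[ℝ] EuclideanSpace ℝ (Fin M) :=
  LinearMap.toContinuousLinearMap
    { toFun := fun z => (WithLp.toLp 2 (fun m => z (i, m)) : EuclideanSpace ℝ (Fin M))
      map_add' := by intro v w; ext m; simp
      map_smul' := by intro c v; ext m; simp }

/-- `∂ₖ fₙ(z) ∈ ℝ^M`: the gradient block of the `n`-th coordinate of `f`
with respect to the `k`-th slot at `z`. -/
def slotPartial {K M N : ℕ} (f : EuclideanSpace ℝ (Fin K × Fin M) → EuclideanSpace ℝ (Fin N))
    (n : Fin N) (k : Fin K) (z : EuclideanSpace ℝ (Fin K × Fin M)) :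
    EuclideanSpace ℝ (Fin M) :=
  WithLp.toLp 2 (fun m => fderiv ℝ (fun w => f w n) z (slotIncl K M k (EuclideanSpace.single m 1)))

/-- `f` is compositional on `S`: every coordinate is locally influenced by at most one slot. -/
def IsCompositionalOn {K M N : ℕ}
    (f : EuclideanSpace ℝ (Fin K × Fin M) → EuclideanSpace ℝ (Fin N))
    (S : Set (EuclideanSpace ℝ (Fin K × Fin M))) : Prop :=
  ∀ z ∈ S, ∀ n : Fin N, ∀ k j : Fin K, k ≠ j →
    slotPartial f n k z ≠ 0 → slotPartial f n j z = 0

open Classical in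
/-- `I_k^f(z)`: the coordinates locally influenced by slot `k`. -/
def influenced {K M N : ℕ} (f : EuclideanSpace ℝ (Fin K × Fin M) → EuclideanSpace ℝ (Fin N))
    (z : EuclideanSpace ℝ (Fin K × Fin M)) (k : Fin K) : Finset (Fin N) :=
  Finset.univ.filter fun n => slotPartial f n k z ≠ 0

/-- The Jacobian matrix of the sub-vector `f_S` at `z`. -/
def jacMatrix {K M N : ℕ} (f : EuclideanSpace ℝ (Fin K × Fin M) → EuclideanSpace ℝ (Fin N))
    (z : EuclideanSpace ℝ (Fin K × Fin M)) (S : Finset (Fin N)) :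
    Matrix S (Fin K × Fin M) ℝ :=
  fun n p => fderiv ℝ (fun w => f w (n : Fin N)) z (EuclideanSpace.single p 1)

/-- `f` is irreducible on `S`. -/
def IsIrreducibleOn {K M N : ℕ}
    (f : EuclideanSpace ℝ (Fin K × Fin M) → EuclideanSpace ℝ (Fin N))
    (S : Set (EuclideanSpace ℝ (Fin K × Fin M))) : Prop :=
  ∀ z ∈ S, ∀ k : Fin K, ∀ S₁ S₂ : Finset (Fin N),
    Disjoint S₁ S₂ → S₁.Nonempty → S₂.Nonempty → S₁ ∪ S₂ = influenced f z k →
    (jacMatrix f z (influenced f z k)).rank < (jacMatrix f z S₁).rank + (jacMatrix f z S₂).rank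

/-- `g` is a `C^r`-diffeomorphism around the closed set `S` with values in `F`. -/
def IsDiffeoAround {E F : Type*} [NormedAddCommGroup E] [NormedSpace ℝ E]
    [NormedAddCommGroup F] [NormedSpace ℝ F] (r : ℕ) (g : E → F) (S : Set E) : Prop :=
  ∃ U : Set E, IsOpen U ∧ S ⊆ U ∧ ContDiffOn ℝ r g U ∧ S.InjOn g ∧
    ∀ z ∈ S, Function.Injective (fderiv ℝ g z)

/-- The product set `Z₁ × ⋯ × Z_K ⊆ ℝ^{K·M}`. -/
def prodSet {K M : ℕ} (Zk : Fin K → Set (EuclideanSpace ℝ (Fin M))) :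
    Set (EuclideanSpace ℝ (Fin K × Fin M)) :=
  {z | ∀ k, slot k z ∈ Zk k}

/-- `Z'` is a slot-supported subset of `Z₁ × ⋯ × Z_K`. -/
def IsSlotSupported {K M : ℕ} (Zk : Fin K → Set (EuclideanSpace ℝ (Fin M)))
    (Z' : Set (EuclideanSpace ℝ (Fin K × Fin M))) : Prop :=
  Z' ⊆ prodSet Zk ∧ ∀ k, slot k '' Z' = Zk k

/-- Topological support of a measure: points all of whose open neighbourhoods
have positive measure. -/
def measSupport {X : Type*} [TopologicalSpace X] [MeasurableSpace X]
    (p : Measure X) : Set X :=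
  {x | ∀ U : Set X, IsOpen U → x ∈ U → 0 < p U}

/-- The `(i,j)` Jacobian block (an `M×M` linear map) of `h : ℝ^{K·M} → ℝ^{K·M}` at `z`. -/
def jacBlock {K M : ℕ}
    (h : EuclideanSpace ℝ (Fin K × Fin M) → EuclideanSpace ℝ (Fin K × Fin M))
    (i j : Fin K) (z : EuclideanSpace ℝ (Fin K × Fin M)) :
    EuclideanSpace ℝ (Fin M) →L[ℝ] EuclideanSpace ℝ (Fin M) :=
  (slotProj K M i).comp ((fderiv ℝ h z).comp (slotIncl K M j))

/-- `∂ᵢ q(z) ∈ ℝ^M`: the gradient of `q : ℝ^{K·M} → ℝ` with respect to slot `i` at `z`. -/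
def slotGrad {K M : ℕ} (q : EuclideanSpace ℝ (Fin K × Fin M) → ℝ) (i : Fin K)
    (z : EuclideanSpace ℝ (Fin K × Fin M)) : EuclideanSpace ℝ (Fin M) :=
  WithLp.toLp 2 (fun m => fderiv ℝ q z (slotIncl K M i (EuclideanSpace.single m 1)))

/-- `∂ⱼ(∂ᵢ q)(z)`: the `M×M` Hessian block of `q` pairing slots `i` and `j` at `z`. -/
def hessBlock {K M : ℕ} (q : EuclideanSpace ℝ (Fin K × Fin M) → ℝ) (i j : Fin K)
    (z : EuclideanSpace ℝ (Fin K × Fin M)) :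
    EuclideanSpace ℝ (Fin M) →L[ℝ] EuclideanSpace ℝ (Fin M) :=
  (fderiv ℝ (slotGrad q i) z).comp (slotIncl K M j)


section Aux

variable {K M : ℕ}

lemma slotProj_apply' (i : Fin K) (x : EuclideanSpace ℝ (Fin K × Fin M)) (m : Fin M) :
    slotProj K M i x m = x (i, m) := rfl

lemma eq_zero_of_slotProj' (x : EuclideanSpace ℝ (Fin K × Fin M))
    (hz : ∀ i, slotProj K M i x = 0) : x = 0 := by
  ext p; exact congrArg (fun v => v.ofLp p.2) (hz p.1)

lemma jacBlock_apply' (h : EuclideanSpace ℝ (Fin K × Fin M) → EuclideanSpace ℝ (Fin K × Fin M))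
    (i j : Fin K) (z : EuclideanSpace ℝ (Fin K × Fin M)) (v : EuclideanSpace ℝ (Fin M)) :
    jacBlock h i j z v = slotProj K M i (fderiv ℝ h z (slotIncl K M j v)) := rfl

/-- Conjugation `A ↦ P ∘ A ∘ Q` as a linear map (hence continuous, finite dims). -/
def conjMap (K M : ℕ) (i j : Fin K) :
    (EuclideanSpace ℝ (Fin K × Fin M) →L[ℝ] EuclideanSpace ℝ (Fin K × Fin M)) →ₗ[ℝ]
    (EuclideanSpace ℝ (Fin M) →L[ℝ] EuclideanSpace ℝ (Fin M)) where
  toFun A := (slotProj K M i).comp (A.comp (slotIncl K M j))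
  map_add' A B := by
    ext v m
    simp [ContinuousLinearMap.add_comp, ContinuousLinearMap.comp_add]
  map_smul' c A := by
    ext v m
    simp [ContinuousLinearMap.smul_comp, ContinuousLinearMap.comp_smulₛₗ]

lemma jacBlock_continuousOn
    (h : EuclideanSpace ℝ (Fin K × Fin M) → EuclideanSpace ℝ (Fin K × Fin M))
    (U : Set (EuclideanSpace ℝ (Fin K × Fin M))) (hU : IsOpen U)
    (hh : ContDiffOn ℝ 1 h U) (i j : Fin K) :
    ContinuousOn (fun z => jacBlock h i j z) U := by
  have hcont : ContinuousOn (fun z => fderiv ℝ h z) U :=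
    hh.continuousOn_fderiv_of_isOpen hU le_rfl
  have hc : Continuous (conjMap K M i j) := LinearMap.continuous_of_finiteDimensional _
  exact hc.comp_continuousOn hcont

end Aux


/-- A blockwise-sparse diffeomorphic Jacobian on a convex set has a
globally consistent permutation structure, with invertible diagonal-pattern blocks. -/
theorem global_permutation_of_jacobian_blocks
    (K M : ℕ) (hK : 0 < K) (hM : 0 < M)
    (S U : Set (EuclideanSpace ℝ (Fin K × Fin M)))
    (hSconv : Convex ℝ S) (hU : IsOpen U) (hSU : S ⊆ U)
    (h : EuclideanSpace ℝ (Fin K × Fin M) → EuclideanSpace ℝ (Fin K × Fin M))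
    (hh : ContDiffOn ℝ 1 h U)
    (hDh : ∀ z ∈ S, Function.Bijective (fderiv ℝ h z))
    (huniq : ∀ z ∈ S, ∀ i : Fin K, ∃! j : Fin K, jacBlock h i j z ≠ 0) :
    ∃ π : Equiv.Perm (Fin K),
      (∀ z ∈ S, ∀ i j : Fin K, jacBlock h i j z ≠ 0 ↔ j = π i) ∧
      (∀ z ∈ S, ∀ i : Fin K, Function.Bijective ⇑(jacBlock h i (π i) z)) := by
  classical
  rcases Set.eq_empty_or_nonempty S with hS | ⟨z₀, hz₀⟩
  · exact ⟨Equiv.refl _, by simp [hS], by simp [hS]⟩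
  -- pick the unique column index at the base point z₀
  choose σ hσ using fun i => (huniq z₀ hz₀ i).exists
  have hσu : ∀ i j, jacBlock h i j z₀ ≠ 0 → j = σ i := by
    intro i j hj
    obtain ⟨j', _, hu⟩ := huniq z₀ hz₀ i
    rw [hu j hj, hu (σ i) (hσ i)]
  -- constancy over the convex (hence preconnected) set S
  have key : ∀ z ∈ S, ∀ i j : Fin K, jacBlock h i j z ≠ 0 ↔ j = σ i := by
    have const : ∀ (i : Fin K), ∀ z ∈ S, jacBlock h i (σ i) z ≠ 0 := by
      intro i
      by_contra hcon
      push_neg at hcon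
      obtain ⟨z₁, hz₁, hz₁0⟩ := hcon
      set A : Set (EuclideanSpace ℝ (Fin K × Fin M)) :=
        U ∩ (fun z => jacBlock h i (σ i) z) ⁻¹' ({0}ᶜ) with hA_def
      set B : Set (EuclideanSpace ℝ (Fin K × Fin M)) :=
        ⋃ j ∈ ({σ i}ᶜ : Set (Fin K)), U ∩ (fun z => jacBlock h i j z) ⁻¹' ({0}ᶜ) with hB_def
      have hAopen : IsOpen A :=
        (jacBlock_continuousOn h U hU hh i (σ i)).isOpen_inter_preimage hU
          isOpen_compl_singleton
      have hBopen : IsOpen B := by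
        refine isOpen_biUnion fun j _ => ?_
        exact (jacBlock_continuousOn h U hU hh i j).isOpen_inter_preimage hU
          isOpen_compl_singleton
      have hcover : S ⊆ A ∪ B := by
        intro z hz
        obtain ⟨j, hjne, _⟩ := huniq z hz i
        by_cases hji : j = σ i
        · exact Or.inl ⟨hSU hz, by simpa [hji] using hjne⟩
        · exact Or.inr (Set.mem_biUnion hji ⟨hSU hz, hjne⟩)
      have hAne : (S ∩ A).Nonempty := ⟨z₀, hz₀, hSU hz₀, hσ i⟩
      have hBne : (S ∩ B).Nonempty := by
        obtain ⟨j, hjne, _⟩ := huniq z₁ hz₁ i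
        have hji : j ≠ σ i := fun e => hjne (e ▸ hz₁0 : jacBlock h i j z₁ = 0)
        exact ⟨z₁, hz₁, Set.mem_biUnion hji ⟨hSU hz₁, hjne⟩⟩
      obtain ⟨w, hwS, hwA, hwB⟩ :=
        hSconv.isPreconnected A B hAopen hBopen hcover hAne hBne
      obtain ⟨j, hjne, hw⟩ := Set.mem_iUnion₂.mp hwB
      obtain ⟨j', _, hu⟩ := huniq w hwS i
      have e1 : (σ i) = j' := hu (σ i) hwA.2
      have e2 : j = j' := hu j hw.2
      exact hjne (e2.trans e1.symm)
    intro z hz i j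
    constructor
    · intro hj
      obtain ⟨j', _, hu⟩ := huniq z hz i
      rw [hu j hj, hu (σ i) (const i z hz)]
    · rintro rfl; exact const i z hz
  -- σ is bijective
  have hσsurj : Function.Surjective σ := by
    intro j
    by_contra hj
    push_neg at hj
    have hcol : ∀ i, jacBlock h i j z₀ = 0 := by
      intro i
      by_contra hne
      exact hj i ((key z₀ hz₀ i j).mp hne).symm
    set v : EuclideanSpace ℝ (Fin M) := EuclideanSpace.single ⟨0, hM⟩ (1 : ℝ) with hv
    set w : EuclideanSpace ℝ (Fin K × Fin M) := slotIncl K M j v with hw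
    have hDw : fderiv ℝ h z₀ w = 0 := by
      apply eq_zero_of_slotProj'
      intro i
      have := hcol i
      rw [jacBlock] at this
      calc slotProj K M i (fderiv ℝ h z₀ w)
          = jacBlock h i j z₀ v := rfl
        _ = 0 := by rw [hcol i]; rfl
    have hw0 : w = 0 := by
      have := (hDh z₀ hz₀).1
      apply this
      rw [hDw, map_zero]
    have : w (j, ⟨0, hM⟩) = 1 := by
      have e : w (j, ⟨0, hM⟩) = if j = j then v ⟨0, hM⟩ else 0 := rfl
      rw [e, if_pos rfl, hv, EuclideanSpace.single_apply, if_pos rfl]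
    rw [hw0] at this
    norm_num at this
  have hσinj : Function.Injective σ := Finite.injective_iff_surjective.mpr hσsurj
  refine ⟨Equiv.ofBijective σ ⟨hσinj, hσsurj⟩, ?_, ?_⟩
  · intro z hz i j
    exact key z hz i j
  · intro z hz i
    have hπ : (Equiv.ofBijective σ ⟨hσinj, hσsurj⟩) i = σ i := rfl
    rw [hπ]
    have hker : ∀ v : EuclideanSpace ℝ (Fin M), jacBlock h i (σ i) z v = 0 → v = 0 := by
      intro v hv
      set w : EuclideanSpace ℝ (Fin K × Fin M) := slotIncl K M (σ i) v with hw
      have hDw : fderiv ℝ h z w = 0 := by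
        apply eq_zero_of_slotProj'
        intro i'
        by_cases hii : i' = i
        · subst hii; exact hv
        · have h0 : jacBlock h i' (σ i) z = 0 := by
            by_contra hne
            exact hii (hσinj ((key z hz i' (σ i)).mp hne).symm)
          calc slotProj K M i' (fderiv ℝ h z w)
              = jacBlock h i' (σ i) z v := rfl
            _ = 0 := by rw [h0]; rfl
      have hw0 : w = 0 := by
        apply (hDh z hz).1
        rw [hDw, map_zero]
      ext m
      have : w (σ i, m) = 0 := by rw [hw0]; rfl
      simpa [hw, slotIncl] using this
    have hinj : Function.Injective ⇑(jacBlock h i (σ i) z) := by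
      intro v₁ v₂ he
      have : jacBlock h i (σ i) z (v₁ - v₂) = 0 := by rw [map_sub, he, sub_self]
      exact sub_eq_zero.mp (hker _ this)
    exact ⟨hinj, LinearMap.injective_iff_surjective.mp hinj⟩

end
end

section
/- (Compositionality implies additivity.) Let Z = Z₁ × ⋯ × Z_K with each Z_k ⊆ ℝ^M convex, and let f be twice continuously differentiable and compositional on an open set U ⊆ ℝ^{KM} containing Z, with values in ℝ^N. Then f is additive on Z: there exist functions f_k: Z_k → ℝ^N, k ∈ [K], such that f(z) = ∑_{k=1}^K f_k(z_k) for every z ∈ Z. -/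
open MeasureTheory Set Topology

noncomputable section

namespace CompAux

variable {K M : ℕ}

lemma slotIncl_apply (j : Fin K) (v : EuclideanSpace ℝ (Fin M)) (p : Fin K × Fin M) :
    slotIncl K M j v p = if p.1 = j then v p.2 else 0 := rfl

lemma slot_add (k : Fin K) (x y : EuclideanSpace ℝ (Fin K × Fin M)) :
    slot k (x + y) = slot k x + slot k y := by ext m; simp [slot]

lemma slot_slotIncl (l j : Fin K) (v : EuclideanSpace ℝ (Fin M)) :
    slot l (slotIncl K M j v) = if l = j then v else 0 := by
  by_cases h : l = j <;> · ext m; simp [slot, slotIncl_apply, h]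

lemma slot_sum (l : Fin K) (S : Finset (Fin K)) (g : Fin K → EuclideanSpace ℝ (Fin K × Fin M)) :
    slot l (∑ k ∈ S, g k) = ∑ k ∈ S, slot l (g k) := by
  classical
  induction S using Finset.induction_on with
  | empty => ext m; simp [slot]
  | insert _ _ hj ih => rw [Finset.sum_insert hj, Finset.sum_insert hj, slot_add, ih]

lemma slotIncl_eq_sum (j : Fin K) (v : EuclideanSpace ℝ (Fin M)) :
    slotIncl K M j v = ∑ m : Fin M, v m • slotIncl K M j (EuclideanSpace.single m 1) := by
  have hv : v = ∑ m : Fin M, v m • EuclideanSpace.single m (1:ℝ) := by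
    ext m'
    have : (∑ m : Fin M, v m • EuclideanSpace.single m (1:ℝ)) m'
        = ∑ m : Fin M, (v m • EuclideanSpace.single m (1:ℝ)) m' := by
      rw [WithLp.ofLp_sum, Finset.sum_apply]
    rw [this]
    simp [EuclideanSpace.single_apply]
  conv_lhs => rw [hv]
  rw [map_sum]
  simp only [_root_.map_smul]

lemma clm_slotIncl_eq_sum (L : EuclideanSpace ℝ (Fin K × Fin M) →L[ℝ] ℝ)
    (j : Fin K) (v : EuclideanSpace ℝ (Fin M)) :
    L (slotIncl K M j v) = ∑ m : Fin M, v m * L (slotIncl K M j (EuclideanSpace.single m 1)) := by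
  rw [slotIncl_eq_sum, map_sum]
  simp

end CompAux

namespace CompAux

variable {K M : ℕ} {U : Set (EuclideanSpace ℝ (Fin K × Fin M))}

lemma hasFDerivAt_eval (hU : IsOpen U) {q : EuclideanSpace ℝ (Fin K × Fin M) → ℝ}
    (hq : ContDiffOn ℝ 2 q U) {z : EuclideanSpace ℝ (Fin K × Fin M)} (hz : z ∈ U)
    (u : EuclideanSpace ℝ (Fin K × Fin M)) :
    HasFDerivAt (fun z' => fderiv ℝ q z' u)
      ((ContinuousLinearMap.apply ℝ ℝ u).comp (fderiv ℝ (fderiv ℝ q) z)) z := by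
  have h1 : ContDiffOn ℝ 1 (fderiv ℝ q) U := hq.fderiv_of_isOpen hU (by norm_num)
  have h2 : DifferentiableAt ℝ (fderiv ℝ q) z :=
    (h1.differentiableOn one_ne_zero).differentiableAt (hU.mem_nhds hz)
  exact ((ContinuousLinearMap.apply ℝ ℝ u).hasFDerivAt).comp z h2.hasFDerivAt

lemma keyzero (hU : IsOpen U) {q : EuclideanSpace ℝ (Fin K × Fin M) → ℝ}
    (hq : ContDiffOn ℝ 2 q U) {z : EuclideanSpace ℝ (Fin K × Fin M)} (hz : z ∈ U)
    (u : EuclideanSpace ℝ (Fin K × Fin M)) (hev : ∀ᶠ x in 𝓝 z, fderiv ℝ q x u = 0)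
    (d : EuclideanSpace ℝ (Fin K × Fin M)) :
    fderiv ℝ (fderiv ℝ q) z d u = 0 := by
  have h1 := hasFDerivAt_eval hU hq hz u
  have heq : (fun z' => fderiv ℝ q z' u) =ᶠ[𝓝 z] (fun _ => (0:ℝ)) := hev
  have h2 : HasFDerivAt (𝕜 := ℝ) (fun z' => fderiv ℝ q z' u) 0 z :=
    (hasFDerivAt_const (0:ℝ) z).congr_of_eventuallyEq heq
  have := h1.unique h2
  have := DFunLike.congr_fun this d
  simpa using this

lemma symm_snd (hU : IsOpen U) {q : EuclideanSpace ℝ (Fin K × Fin M) → ℝ}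
    (hq : ContDiffOn ℝ 2 q U) {z : EuclideanSpace ℝ (Fin K × Fin M)} (hz : z ∈ U)
    (a b : EuclideanSpace ℝ (Fin K × Fin M)) :
    fderiv ℝ (fderiv ℝ q) z a b = fderiv ℝ (fderiv ℝ q) z b a :=
  (hq.contDiffAt (hU.mem_nhds hz)).isSymmSndFDerivAt (by norm_num) a b

lemma mixed_zero (hU : IsOpen U) {q : EuclideanSpace ℝ (Fin K × Fin M) → ℝ}
    (hq : ContDiffOn ℝ 2 q U)
    (hcomp : ∀ z ∈ U, ∀ k j : Fin K, k ≠ j →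
      (∃ m, fderiv ℝ q z (slotIncl K M k (EuclideanSpace.single m 1)) ≠ 0) →
      ∀ m, fderiv ℝ q z (slotIncl K M j (EuclideanSpace.single m 1)) = 0)
    {z : EuclideanSpace ℝ (Fin K × Fin M)} (hz : z ∈ U) {j k : Fin K} (hjk : j ≠ k)
    (v w : EuclideanSpace ℝ (Fin M)) :
    fderiv ℝ (fderiv ℝ q) z (slotIncl K M k w) (slotIncl K M j v) = 0 := by
  have hcomp' : ∀ z' ∈ U, ∀ k' j' : Fin K, k' ≠ j' →
      (∃ m, fderiv ℝ q z' (slotIncl K M k' (EuclideanSpace.single m 1)) ≠ 0) →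
      ∀ v', fderiv ℝ q z' (slotIncl K M j' v') = 0 := by
    intro z' hz' k' j' hkj hex v'
    rw [clm_slotIncl_eq_sum]
    refine Finset.sum_eq_zero fun m _ => ?_
    rw [hcomp z' hz' k' j' hkj hex m, mul_zero]
  by_contra hT
  have hfcont : ContinuousOn (fderiv ℝ q) U :=
    hq.continuousOn_fderiv_of_isOpen hU (by norm_num)
  have hBcont : ContinuousOn (fderiv ℝ (fderiv ℝ q)) U :=
    (hq.fderiv_of_isOpen hU (by norm_num)).continuousOn_fderiv_of_isOpen hU le_rfl
  have hTcont : ContinuousOn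
      (fun z' => fderiv ℝ (fderiv ℝ q) z' (slotIncl K M k w) (slotIncl K M j v)) U :=
    (hBcont.clm_apply continuousOn_const).clm_apply continuousOn_const
  have hTevent : ∀ᶠ x in 𝓝 z, x ∈ U ∧
      fderiv ℝ (fderiv ℝ q) x (slotIncl K M k w) (slotIncl K M j v) ≠ 0 :=
    (hU.eventually_mem hz).and
      ((hTcont.continuousAt (hU.mem_nhds hz)).eventually_ne hT)
  rw [eventually_nhds_iff] at hTevent
  obtain ⟨V, hV, hVopen, hzV⟩ := hTevent
  by_cases hA : ∃ z₁ ∈ V, ∃ m, fderiv ℝ q z₁ (slotIncl K M k (EuclideanSpace.single m 1)) ≠ 0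
  · obtain ⟨z₁, hz₁V, m, hm⟩ := hA
    have hz₁U : z₁ ∈ U := (hV z₁ hz₁V).1
    have hcA : ContinuousAt
        (fun x => fderiv ℝ q x (slotIncl K M k (EuclideanSpace.single m 1))) z₁ :=
      (hfcont.clm_apply continuousOn_const).continuousAt (hU.mem_nhds hz₁U)
    have hev : ∀ᶠ x in 𝓝 z₁, fderiv ℝ q x (slotIncl K M j v) = 0 := by
      filter_upwards [hcA.eventually_ne hm, hVopen.mem_nhds hz₁V] with x hx1 hx2
      exact hcomp' x (hV x hx2).1 k j hjk.symm ⟨m, hx1⟩ v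
    have := keyzero hU hq hz₁U (slotIncl K M j v) hev (slotIncl K M k w)
    exact (hV z₁ hz₁V).2 this
  · push_neg at hA
    have hev : ∀ᶠ x in 𝓝 z, fderiv ℝ q x (slotIncl K M k w) = 0 := by
      filter_upwards [hVopen.mem_nhds hzV] with x hx
      rw [clm_slotIncl_eq_sum]
      exact Finset.sum_eq_zero fun m _ => by rw [hA x hx m, mul_zero]
    have h0 := keyzero hU hq hz (slotIncl K M k w) hev (slotIncl K M j v)
    rw [symm_snd hU hq hz] at h0
    exact hT h0

end CompAux

namespace CompAux

variable {K M : ℕ} {U : Set (EuclideanSpace ℝ (Fin K × Fin M))}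

lemma const_along (hU : IsOpen U) {q : EuclideanSpace ℝ (Fin K × Fin M) → ℝ}
    (hq : ContDiffOn ℝ 2 q U)
    (hcomp : ∀ z ∈ U, ∀ k j : Fin K, k ≠ j →
      (∃ m, fderiv ℝ q z (slotIncl K M k (EuclideanSpace.single m 1)) ≠ 0) →
      ∀ m, fderiv ℝ q z (slotIncl K M j (EuclideanSpace.single m 1)) = 0)
    {c : EuclideanSpace ℝ (Fin K × Fin M)} {k j : Fin K} (hjk : j ≠ k)
    (w v : EuclideanSpace ℝ (Fin M))
    (hseg : ∀ t ∈ Icc (0:ℝ) 1, c + t • slotIncl K M k w ∈ U) :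
    fderiv ℝ q (c + slotIncl K M k w) (slotIncl K M j v)
      = fderiv ℝ q c (slotIncl K M j v) := by
  set D := slotIncl K M k w with hD
  have hderiv : ∀ t ∈ Icc (0:ℝ) 1,
      HasDerivAt (fun t : ℝ => fderiv ℝ q (c + t • D) (slotIncl K M j v)) 0 t := by
    intro t ht
    have hmem := hseg t ht
    have hγ : HasDerivAt (fun t : ℝ => c + t • D) D t := by
      simpa using ((hasDerivAt_id t).smul_const D).const_add c
    have hF := hasFDerivAt_eval hU hq hmem (slotIncl K M j v)
    have hcomp2 := hF.comp_hasDerivAt t hγ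
    have hzero : ((ContinuousLinearMap.apply ℝ ℝ (slotIncl K M j v)).comp
        (fderiv ℝ (fderiv ℝ q) (c + t • D))) D = 0 := by
      simpa using mixed_zero hU hq hcomp hmem hjk v w
    rw [hzero] at hcomp2
    exact hcomp2
  have hcont : ContinuousOn (fun t : ℝ => fderiv ℝ q (c + t • D) (slotIncl K M j v))
      (Icc 0 1) := fun t ht => ((hderiv t ht).continuousAt).continuousWithinAt
  have h10 := constant_of_has_deriv_right_zero hcont
    (fun t ht => (hderiv t (Ico_subset_Icc_self ht)).hasDerivWithinAt) 1 (by norm_num)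
  simpa using h10

lemma step_const (hU : IsOpen U) {q : EuclideanSpace ℝ (Fin K × Fin M) → ℝ}
    (hq : ContDiffOn ℝ 2 q U)
    (hcomp : ∀ z ∈ U, ∀ k j : Fin K, k ≠ j →
      (∃ m, fderiv ℝ q z (slotIncl K M k (EuclideanSpace.single m 1)) ≠ 0) →
      ∀ m, fderiv ℝ q z (slotIncl K M j (EuclideanSpace.single m 1)) = 0)
    {w : EuclideanSpace ℝ (Fin K × Fin M)} {i j : Fin K} (hij : j ≠ i)
    (δ u : EuclideanSpace ℝ (Fin M))
    (hmemU : ∀ t ∈ Icc (0:ℝ) 1, ∀ s ∈ Icc (0:ℝ) 1,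
      w + t • slotIncl K M j δ + s • slotIncl K M i u ∈ U) :
    q (w + slotIncl K M j δ + slotIncl K M i u) - q (w + slotIncl K M j δ)
      = q (w + slotIncl K M i u) - q w := by
  set Dj := slotIncl K M j δ with hDj
  set Di := slotIncl K M i u with hDi
  have hdiffOn : DifferentiableOn ℝ q U := hq.differentiableOn (by norm_num)
  have hderiv : ∀ t ∈ Icc (0:ℝ) 1,
      HasDerivAt (fun t : ℝ => q (w + t • Dj + Di) - q (w + t • Dj)) 0 t := by
    intro t ht
    have hmem0 : w + t • Dj ∈ U := by
      have := hmemU t ht 0 (by norm_num); simpa using this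
    have hmem1 : w + t • Dj + Di ∈ U := by
      have := hmemU t ht 1 (by norm_num); simpa using this
    have hγ0 : HasDerivAt (fun t : ℝ => w + t • Dj) Dj t := by
      simpa using ((hasDerivAt_id t).smul_const Dj).const_add w
    have hγ1 : HasDerivAt (fun t : ℝ => w + t • Dj + Di) Dj t := by
      simpa using (((hasDerivAt_id t).smul_const Dj).const_add w).add_const Di
    have hq0 : HasFDerivAt q (fderiv ℝ q (w + t • Dj)) (w + t • Dj) :=
      (hdiffOn.differentiableAt (hU.mem_nhds hmem0)).hasFDerivAt
    have hq1 : HasFDerivAt q (fderiv ℝ q (w + t • Dj + Di)) (w + t • Dj + Di) :=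
      (hdiffOn.differentiableAt (hU.mem_nhds hmem1)).hasFDerivAt
    have h1 := hq1.comp_hasDerivAt t hγ1
    have h0 := hq0.comp_hasDerivAt t hγ0
    have heq : fderiv ℝ q (w + t • Dj + Di) Dj = fderiv ℝ q (w + t • Dj) Dj := by
      have := const_along hU hq hcomp (c := w + t • Dj) hij u δ
        (fun s hs => hmemU t ht s hs)
      simpa [hDj, hDi] using this
    have := h1.sub h0
    rw [heq, sub_self] at this
    exact this
  have hcont : ContinuousOn (fun t : ℝ => q (w + t • Dj + Di) - q (w + t • Dj))
      (Icc 0 1) := fun t ht => ((hderiv t ht).continuousAt).continuousWithinAt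
  have h10 := constant_of_has_deriv_right_zero hcont
    (fun t ht => (hderiv t (Ico_subset_Icc_self ht)).hasDerivWithinAt) 1 (by norm_num)
  simpa using h10

end CompAux

namespace CompAux

variable {K M : ℕ} {U : Set (EuclideanSpace ℝ (Fin K × Fin M))}

lemma slot_smul (l : Fin K) (t : ℝ) (x : EuclideanSpace ℝ (Fin K × Fin M)) :
    slot l (t • x) = t • slot l x := by ext m; simp [slot]

lemma slot_sum_incl (l : Fin K) (S : Finset (Fin K)) (g : Fin K → EuclideanSpace ℝ (Fin M)) :
    slot l (∑ k ∈ S, slotIncl K M k (g k)) = if l ∈ S then g l else 0 := by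
  classical
  rw [slot_sum]
  rw [Finset.sum_congr rfl (fun k _ => slot_slotIncl l k (g k))]
  exact Finset.sum_ite_eq S l g

lemma ext_slot {x y : EuclideanSpace ℝ (Fin K × Fin M)}
    (h : ∀ l, slot l x = slot l y) : x = y := by
  ext p
  have := congrArg (fun v => v p.2) (h p.1)
  simpa [slot] using this

lemma additive_scalar {Zk : Fin K → Set (EuclideanSpace ℝ (Fin M))}
    (hZkconv : ∀ k, Convex ℝ (Zk k)) (hU : IsOpen U) (hZU : prodSet Zk ⊆ U)
    {q : EuclideanSpace ℝ (Fin K × Fin M) → ℝ} (hq : ContDiffOn ℝ 2 q U)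
    (hcomp : ∀ z ∈ U, ∀ k j : Fin K, k ≠ j →
      (∃ m, fderiv ℝ q z (slotIncl K M k (EuclideanSpace.single m 1)) ≠ 0) →
      ∀ m, fderiv ℝ q z (slotIncl K M j (EuclideanSpace.single m 1)) = 0)
    {a b : EuclideanSpace ℝ (Fin K × Fin M)}
    (ha : a ∈ prodSet Zk) (hb : b ∈ prodSet Zk) :
    q b = q a + ∑ k : Fin K,
      (q (a + slotIncl K M k (slot k b - slot k a)) - q a) := by
  classical
  set δ : Fin K → EuclideanSpace ℝ (Fin M) := fun k => slot k b - slot k a with hδ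
  have hmem : ∀ (S : Finset (Fin K)) (i j : Fin K), i ∉ S → j ∉ S → j ≠ i →
      ∀ t ∈ Icc (0:ℝ) 1, ∀ s ∈ Icc (0:ℝ) 1,
      (a + ∑ k ∈ S, slotIncl K M k (δ k)) + t • slotIncl K M j (δ j)
        + s • slotIncl K M i (δ i) ∈ prodSet Zk := by
    intro S i j hiS hjS hji t ht s hs l
    have hslot : slot l ((a + ∑ k ∈ S, slotIncl K M k (δ k))
          + t • slotIncl K M j (δ j) + s • slotIncl K M i (δ i))
        = slot l a + (if l ∈ S then δ l else 0)
          + t • (if l = j then δ j else 0) + s • (if l = i then δ i else 0) := by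
      rw [slot_add, slot_add, slot_add, slot_sum_incl, slot_smul, slot_smul,
        slot_slotIncl, slot_slotIncl]
    rw [hslot]
    by_cases hlS : l ∈ S
    · have hlj : l ≠ j := fun h => hjS (h ▸ hlS)
      have hli : l ≠ i := fun h => hiS (h ▸ hlS)
      rw [if_pos hlS, if_neg hlj, if_neg hli]
      simp only [smul_zero, add_zero]
      have heq : slot l a + δ l = slot l b := by simp [hδ]
      rw [heq]; exact hb l
    · by_cases hlj : l = j
      · subst hlj
        rw [if_neg hlS, if_pos rfl, if_neg hji]
        simp only [smul_zero, add_zero]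
        have := (hZkconv l).add_smul_sub_mem (ha l) (hb l) ht
        exact this
      · by_cases hli : l = i
        · subst hli
          rw [if_neg hlS, if_neg hlj, if_pos rfl]
          simp only [smul_zero, add_zero]
          have := (hZkconv l).add_smul_sub_mem (ha l) (hb l) hs
          exact this
        · rw [if_neg hlS, if_neg hlj, if_neg hli]
          simp only [smul_zero, add_zero]
          exact ha l
  have key : ∀ (i : Fin K) (S : Finset (Fin K)), i ∉ S →
      q ((a + ∑ k ∈ S, slotIncl K M k (δ k)) + slotIncl K M i (δ i))
        - q (a + ∑ k ∈ S, slotIncl K M k (δ k))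
      = q (a + slotIncl K M i (δ i)) - q a := by
    intro i S
    induction S using Finset.induction_on with
    | empty => intro _; simp
    | @insert j S hjS ih =>
      intro hiins
      have hij : i ≠ j := fun h => hiins (h ▸ Finset.mem_insert_self j S)
      have hiS : i ∉ S := fun h => hiins (Finset.mem_insert_of_mem h)
      rw [Finset.sum_insert hjS]
      have harr : a + (slotIncl K M j (δ j) + ∑ k ∈ S, slotIncl K M k (δ k))
          = (a + ∑ k ∈ S, slotIncl K M k (δ k)) + slotIncl K M j (δ j) := by abel
      rw [harr]
      have hstep := step_const hU hq hcomp (w := a + ∑ k ∈ S, slotIncl K M k (δ k))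
        (i := i) (j := j) (fun h => hij h.symm) (δ j) (δ i)
        (fun t ht s hs => hZU (hmem S i j hiS hjS (fun h => hij h.symm) t ht s hs))
      rw [hstep]
      exact ih hiS
  have tele : ∀ S : Finset (Fin K),
      q (a + ∑ k ∈ S, slotIncl K M k (δ k))
        = q a + ∑ k ∈ S, (q (a + slotIncl K M k (δ k)) - q a) := by
    intro S
    induction S using Finset.induction_on with
    | empty => simp
    | @insert i S hiS ih =>
      rw [Finset.sum_insert hiS, Finset.sum_insert hiS]
      have harr : a + (slotIncl K M i (δ i) + ∑ k ∈ S, slotIncl K M k (δ k))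
          = (a + ∑ k ∈ S, slotIncl K M k (δ k)) + slotIncl K M i (δ i) := by abel
      rw [harr]
      have := key i S hiS
      rw [sub_eq_iff_eq_add] at this
      rw [this, ih]
      ring
  have hba : a + ∑ k : Fin K, slotIncl K M k (δ k) = b := by
    apply ext_slot
    intro l
    rw [slot_add, slot_sum_incl]
    simp [hδ]
  have := tele Finset.univ
  rw [hba] at this
  exact this

end CompAux

namespace CompAux

lemma esum_apply {K N : ℕ} (S : Finset (Fin K)) (g : Fin K → EuclideanSpace ℝ (Fin N))
    (n : Fin N) : (∑ k ∈ S, g k) n = ∑ k ∈ S, g k n := by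
  classical
  induction S using Finset.induction_on with
  | empty => simp
  | insert _ _ h ih => rw [Finset.sum_insert h, Finset.sum_insert h, ← ih]; simp

end CompAux


/-- Compositionality implies additivity. -/
theorem compositional_implies_additive
    (K M N : ℕ) (hK : 0 < K) (hM : 0 < M) (hN : 0 < N)
    (Zk : Fin K → Set (EuclideanSpace ℝ (Fin M))) (hZkconv : ∀ k, Convex ℝ (Zk k))
    (U : Set (EuclideanSpace ℝ (Fin K × Fin M))) (hU : IsOpen U) (hZU : prodSet Zk ⊆ U)
    (f : EuclideanSpace ℝ (Fin K × Fin M) → EuclideanSpace ℝ (Fin N))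
    (hf : ContDiffOn ℝ 2 f U) (hcomp : IsCompositionalOn f U) :
    ∃ fk : Fin K → (EuclideanSpace ℝ (Fin M) → EuclideanSpace ℝ (Fin N)),
      ∀ z ∈ prodSet Zk, f z = ∑ k : Fin K, fk k (slot k z) := by
  classical
  by_cases hne : ∃ z₀, z₀ ∈ prodSet Zk
  swap
  · exact ⟨fun _ _ => 0, fun z hz => absurd ⟨z, hz⟩ hne⟩
  obtain ⟨z₀, hz₀⟩ := hne
  set k₀ : Fin K := ⟨0, hK⟩
  refine ⟨fun k v => f (z₀ + slotIncl K M k (v - slot k z₀)) - f z₀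
    + (if k = k₀ then f z₀ else 0), fun z hz => ?_⟩
  ext n
  set q : EuclideanSpace ℝ (Fin K × Fin M) → ℝ := fun w => f w n with hqdef
  have hq : ContDiffOn ℝ 2 q U := by
    have h := (EuclideanSpace.proj n : EuclideanSpace ℝ (Fin N) →L[ℝ] ℝ).contDiff.comp_contDiffOn
      (f := f) (s := U) hf
    exact h
  have hcomp' : ∀ z' ∈ U, ∀ k j : Fin K, k ≠ j →
      (∃ m, fderiv ℝ q z' (slotIncl K M k (EuclideanSpace.single m 1)) ≠ 0) →
      ∀ m, fderiv ℝ q z' (slotIncl K M j (EuclideanSpace.single m 1)) = 0 := by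
    intro z' hz' k j hkj hex m
    have h1 : slotPartial f n k z' ≠ 0 := by
      intro h0
      obtain ⟨m', hm'⟩ := hex
      exact hm' (by simpa [slotPartial] using congrArg (fun v => v m') h0)
    have h2 := hcomp z' hz' n k j hkj h1
    simpa [slotPartial] using congrArg (fun v => v m) h2
  have hadd := CompAux.additive_scalar hZkconv hU hZU hq hcomp' hz₀ hz
  have happly : ∀ k : Fin K,
      (f (z₀ + slotIncl K M k (slot k z - slot k z₀)) - f z₀
        + (if k = k₀ then f z₀ else 0)) n
      = q (z₀ + slotIncl K M k (slot k z - slot k z₀)) - q z₀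
        + (if k = k₀ then q z₀ else 0) := by
    intro k
    by_cases h : k = k₀
    · simp only [if_pos h]; rfl
    · simp only [if_neg h]; rfl
  show q z = _
  rw [CompAux.esum_apply, Finset.sum_congr rfl (fun k _ => happly k),
    Finset.sum_add_distrib, Finset.sum_ite_eq']
  simp only [Finset.mem_univ, if_pos]
  rw [hadd]
  ring

end
end

section
/- Let U ⊆ ℝ^{KM} be open and let q: U → ℝ be twice continuously differentiable such that for every z ∈ U and every pair k ≠ j in [K], not both of the slot gradients ∂_k q(z) and ∂_j q(z) are nonzero. Then all cross-slot mixed second derivatives of q vanish: for every z ∈ U and every i ≠ j in [K], the M×M Hessian block ∂_j(∂_i q)(z) = 0. -/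
open MeasureTheory Set Topology

noncomputable section

/-- Evaluation of a covector on the slot-`k` basis directions, as a CLM. -/
def evalSlot (K M : ℕ) (k : Fin K) :
    (EuclideanSpace ℝ (Fin K × Fin M) →L[ℝ] ℝ) →L[ℝ] EuclideanSpace ℝ (Fin M) :=
  LinearMap.toContinuousLinearMap
    { toFun := fun φ => (WithLp.toLp 2 (fun m => φ (slotIncl K M k (EuclideanSpace.single m 1))) :
        EuclideanSpace ℝ (Fin M))
      map_add' := by intro φ ψ; ext m; simp
      map_smul' := by intro c φ; ext m; simp }

lemma euclid_clm_ext {X : Type*} [NormedAddCommGroup X] [NormedSpace ℝ X] {M : ℕ}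
    (g : EuclideanSpace ℝ (Fin M) →L[ℝ] X)
    (h : ∀ m, g (EuclideanSpace.single m 1) = 0) : g = 0 := by
  ext v
  have hv : v = ∑ m, v m • EuclideanSpace.single m (1:ℝ) := by
    ext m'
    rw [WithLp.ofLp_sum, Finset.sum_apply]
    simp [EuclideanSpace.single_apply]
  rw [hv]
  simp [h]

lemma slotGrad_hasFDerivAt {K M : ℕ} {q : EuclideanSpace ℝ (Fin K × Fin M) → ℝ}
    {z : EuclideanSpace ℝ (Fin K × Fin M)} (hq : ContDiffAt ℝ 2 q z) (k : Fin K) :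
    HasFDerivAt (slotGrad q k)
      ((evalSlot K M k).comp (fderiv ℝ (fderiv ℝ q) z)) z := by
  have h1 : ContDiffAt ℝ 1 (fderiv ℝ q) z := hq.fderiv_right (by norm_num)
  have h2 : HasFDerivAt (fderiv ℝ q) (fderiv ℝ (fderiv ℝ q) z) z :=
    (h1.differentiableAt (by norm_num)).hasFDerivAt
  exact (evalSlot K M k).hasFDerivAt.comp z h2

/-- If at every point of an open set no two distinct slot gradients of a
C² function are simultaneously nonzero, then all cross-slot Hessian blocks vanish. -/
theorem cross_slot_hessian_blocks_vanish
    (K M : ℕ) (hK : 0 < K) (hM : 0 < M)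
    (U : Set (EuclideanSpace ℝ (Fin K × Fin M))) (hU : IsOpen U)
    (q : EuclideanSpace ℝ (Fin K × Fin M) → ℝ) (hq : ContDiffOn ℝ 2 q U)
    (hgrad : ∀ z ∈ U, ∀ k j : Fin K, k ≠ j →
      ¬(slotGrad q k z ≠ 0 ∧ slotGrad q j z ≠ 0)) :
    ∀ z ∈ U, ∀ i j : Fin K, i ≠ j → hessBlock q i j z = 0 := by
  intro z hz i j hij
  classical
  have hCA : ∀ w ∈ U, ContDiffAt ℝ 2 q w := fun w hw => (hq w hw).contDiffAt (hU.mem_nhds hw)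
  set f'' := fun w => fderiv ℝ (fderiv ℝ q) w with hf''def
  have hgradCont : ∀ k : Fin K, ∀ w ∈ U, ContinuousAt (slotGrad q k) w := by
    intro k w hw
    have h1 : ContDiffAt ℝ 1 (fderiv ℝ q) w := (hCA w hw).fderiv_right (by norm_num)
    exact ((evalSlot K M k).continuous.continuousAt).comp h1.continuousAt
  set B : Set (EuclideanSpace ℝ (Fin K × Fin M)) :=
    {w | w ∈ U ∧ slotGrad q i w ≠ 0} with hBdef
  have hBzero : ∀ w ∈ B, ∀ u : EuclideanSpace ℝ (Fin K × Fin M), ∀ m' : Fin M,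
      f'' w u (slotIncl K M j (EuclideanSpace.single m' 1)) = 0 := by
    intro w hw u m'
    obtain ⟨hwU, hwne⟩ := hw
    have hev : ∀ᶠ w' in 𝓝 w, slotGrad q j w' = 0 := by
      have h1 : ∀ᶠ w' in 𝓝 w, w' ∈ U := hU.mem_nhds hwU
      have h2 : ∀ᶠ w' in 𝓝 w, slotGrad q i w' ≠ 0 :=
        (hgradCont i w hwU).eventually_ne hwne
      filter_upwards [h1, h2] with w' h1 h2
      by_contra hne
      exact hgrad w' h1 i j hij ⟨h2, hne⟩
    have hd0 : fderiv ℝ (slotGrad q j) w = 0 := by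
      have heq : fderiv ℝ (slotGrad q j) w
          = fderiv ℝ (fun _ => (0 : EuclideanSpace ℝ (Fin M))) w :=
        Filter.EventuallyEq.fderiv_eq hev
      simpa using heq
    have hEq : (evalSlot K M j).comp (f'' w) = 0 := by
      rw [← (slotGrad_hasFDerivAt (hCA w hwU) j).fderiv]
      exact hd0
    have h1 : evalSlot K M j (f'' w u) = 0 := ContinuousLinearMap.ext_iff.1 hEq u
    have h2 := congrArg (fun x => x m') h1
    simpa [evalSlot] using h2
  have hsymmAt : ∀ w ∈ U, ∀ a b, f'' w a b = f'' w b a := fun w hw a b =>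
    ((hCA w hw).isSymmSndFDerivAt (by norm_num)) a b
  have hBentry : ∀ w ∈ B, ∀ m m' : Fin M,
      f'' w (slotIncl K M j (EuclideanSpace.single m' 1))
        (slotIncl K M i (EuclideanSpace.single m 1)) = 0 := by
    intro w hw m m'
    rw [hsymmAt w hw.1]
    exact hBzero w hw _ m'
  have hfd : fderiv ℝ (slotGrad q i) z = (evalSlot K M i).comp (f'' z) :=
    (slotGrad_hasFDerivAt (hCA z hz) i).fderiv
  by_cases hcl : z ∈ closure B
  · have hf''cont : ContinuousAt f'' z := by
      have h1 : ContDiffAt ℝ 1 (fderiv ℝ q) z := (hCA z hz).fderiv_right (by norm_num)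
      have h2 : ContDiffAt ℝ 0 (fderiv ℝ (fderiv ℝ q)) z := h1.fderiv_right (by norm_num)
      exact h2.continuousAt
    have hentry_cont : ∀ a b, ContinuousAt (fun w => f'' w a b) z := by
      intro a b
      exact ((ContinuousLinearMap.apply ℝ ℝ b).continuous.continuousAt).comp
        (((ContinuousLinearMap.apply ℝ
            (EuclideanSpace ℝ (Fin K × Fin M) →L[ℝ] ℝ) a).continuous.continuousAt).comp
          hf''cont)
    have hne : (𝓝[B] z).NeBot := mem_closure_iff_nhdsWithin_neBot.mp hcl
    have hzentry : ∀ m m' : Fin M,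
        f'' z (slotIncl K M j (EuclideanSpace.single m' 1))
          (slotIncl K M i (EuclideanSpace.single m 1)) = 0 := by
      intro m m'
      set a := slotIncl K M j (EuclideanSpace.single m' 1)
      set b := slotIncl K M i (EuclideanSpace.single m 1)
      have ht1 : Filter.Tendsto (fun w => f'' w a b) (𝓝[B] z) (𝓝 (f'' z a b)) :=
        (hentry_cont a b).continuousWithinAt
      have ht2 : Filter.Tendsto (fun w => f'' w a b) (𝓝[B] z) (𝓝 0) := by
        apply Filter.Tendsto.congr' _ tendsto_const_nhds
        filter_upwards [self_mem_nhdsWithin] with w hw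
        exact (hBentry w hw m m').symm
      exact tendsto_nhds_unique ht1 ht2
    ext v m
    show (fderiv ℝ (slotGrad q i) z) (slotIncl K M j v) m = 0
    rw [hfd]
    show f'' z (slotIncl K M j v) (slotIncl K M i (EuclideanSpace.single m 1)) = 0
    set b := slotIncl K M i (EuclideanSpace.single m 1)
    set ρ : EuclideanSpace ℝ (Fin M) →L[ℝ] ℝ :=
      (ContinuousLinearMap.apply ℝ ℝ b).comp ((f'' z).comp (slotIncl K M j)) with hρ
    have hρ0 : ρ = 0 := euclid_clm_ext ρ (fun m' => hzentry m m')
    have hv := ContinuousLinearMap.ext_iff.1 hρ0 v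
    simpa [hρ] using hv
  · have hev : slotGrad q i =ᶠ[𝓝 z] fun _ => (0 : EuclideanSpace ℝ (Fin M)) := by
      have h1 : ∀ᶠ w in 𝓝 z, w ∈ U := hU.mem_nhds hz
      have h2 : ∀ᶠ w in 𝓝 z, w ∉ closure B :=
        isClosed_closure.isOpen_compl.mem_nhds hcl
      filter_upwards [h1, h2] with w h1 h2
      by_contra hne
      exact h2 (subset_closure ⟨h1, hne⟩)
    have hd0 : fderiv ℝ (slotGrad q i) z = 0 := by
      have heq : fderiv ℝ (slotGrad q i) z
          = fderiv ℝ (fun _ => (0 : EuclideanSpace ℝ (Fin M))) z :=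
        Filter.EventuallyEq.fderiv_eq hev
      simpa using heq
    ext v m
    show (fderiv ℝ (slotGrad q i) z) (slotIncl K M j v) m = 0
    rw [hd0]
    simp

end
end
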